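/- Let G = (I⁰, I¹; F; w) be a distribution instance and let (α⁰, α¹) be a refinement pair that is locally maximin on both sides and mutually proportional responses. Then for every refinement pair (β⁰, β¹) of G and every x ∈ [0,1], Pow(α⁰‖α¹)(x) ≤ Pow(β⁰‖β¹)(x). In particular, any two refinement pairs that are both locally maximin on both sides and mutually proportional responses give rise to the same power function. -/

import Mathlib

open Finset

variable {V : Type*} [DecidableEq V]

/-- `(I0, I1; F; w)` is a valid input instance: the vertex sets `I0`, `I1` are disjoint,
every edge has its first endpoint in `I0` and second endpoint in `I1`,
and vertex weights are positive. -/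
def IsInstance (I0 I1 : Finset V) (F : Finset (V × V)) (w : V → ℝ) : Prop :=
  Disjoint I0 I1 ∧ (∀ e ∈ F, e.1 ∈ I0 ∧ e.2 ∈ I1) ∧ (∀ v ∈ I0 ∪ I1, 0 < w v)

/-- Payload received by a side-0 vertex `i` from edge weights `a`
(the sum of `a` over edges incident to `i`). -/
noncomputable def payload0 (F : Finset (V × V)) (a : V × V → ℝ) (i : V) : ℝ :=
  ∑ e ∈ F.filter (fun e => e.1 = i), a e

/-- Payload received by a side-1 vertex `j` from edge weights `a`. -/
noncomputable def payload1 (F : Finset (V × V)) (a : V × V → ℝ) (j : V) : ℝ :=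
  ∑ e ∈ F.filter (fun e => e.2 = j), a e

/-- `a` is a refinement of the side-0 vertex weights. -/
def IsRefinement0 (I0 : Finset V) (F : Finset (V × V)) (w : V → ℝ) (a : V × V → ℝ) : Prop :=
  (∀ e, 0 ≤ a e) ∧ (∀ e, e ∉ F → a e = 0) ∧
    ∀ i ∈ I0, (∃ j, (i, j) ∈ F) → payload0 F a i = w i

/-- `a` is a refinement of the side-1 vertex weights. -/
def IsRefinement1 (I1 : Finset V) (F : Finset (V × V)) (w : V → ℝ) (a : V × V → ℝ) : Prop :=
  (∀ e, 0 ≤ a e) ∧ (∀ e, e ∉ F → a e = 0) ∧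
    ∀ j ∈ I1, (∃ i, (i, j) ∈ F) → payload1 F a j = w j

/-- Payload density at a side-0 vertex. -/
noncomputable def density0 (F : Finset (V × V)) (w : V → ℝ) (a : V × V → ℝ) (i : V) : ℝ :=
  payload0 F a i / w i

/-- Payload density at a side-1 vertex. -/
noncomputable def density1 (F : Finset (V × V)) (w : V → ℝ) (a : V × V → ℝ) (j : V) : ℝ :=
  payload1 F a j / w j

/-- A side-0 refinement is locally maximin: positive weight is sent only to neighbours
of minimum payload density. -/
def LocallyMaximin0 (F : Finset (V × V)) (w : V → ℝ) (a : V × V → ℝ) : Prop :=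
  ∀ e ∈ F, 0 < a e → ∀ k, (e.1, k) ∈ F → density1 F w a e.2 ≤ density1 F w a k

/-- A side-1 refinement is locally maximin. -/
def LocallyMaximin1 (F : Finset (V × V)) (w : V → ℝ) (a : V × V → ℝ) : Prop :=
  ∀ e ∈ F, 0 < a e → ∀ k, (k, e.2) ∈ F → density0 F w a e.1 ≤ density0 F w a k

/-- `b` is the proportional response to the side-0 refinement `a`. -/
def IsPropRespOf0 (F : Finset (V × V)) (w : V → ℝ) (a b : V × V → ℝ) : Prop :=
  (∀ e, e ∉ F → b e = 0) ∧ ∀ e ∈ F, b e = a e * w e.2 / payload1 F a e.2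

/-- `a` is the proportional response to the side-1 refinement `b`. -/
def IsPropRespOf1 (F : Finset (V × V)) (w : V → ℝ) (b a : V × V → ℝ) : Prop :=
  (∀ e, e ∉ F → a e = 0) ∧ ∀ e ∈ F, a e = b e * w e.1 / payload0 F b e.1

/-- A distribution instance: an instance where every vertex has at least one neighbour
and the vertex weights on each side sum to 1. -/
def IsDistInstance (I0 I1 : Finset V) (F : Finset (V × V)) (w : V → ℝ) : Prop :=
  IsInstance I0 I1 F w ∧
    (∀ i ∈ I0, ∃ j, (i, j) ∈ F) ∧ (∀ j ∈ I1, ∃ i, (i, j) ∈ F) ∧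
    (∑ i ∈ I0, w i = 1) ∧ (∑ j ∈ I1, w j = 1)

/-- The power function `Pow(P ‖ Q)(x)`: the maximum of `Σ t·Q` over `t : F → [0,1]`
with `Σ t·P ≤ x` (fractional knapsack). -/
noncomputable def powFn (F : Finset (V × V)) (P Q : V × V → ℝ) (x : ℝ) : ℝ :=
  sSup {v : ℝ | ∃ t : V × V → ℝ, (∀ e, 0 ≤ t e ∧ t e ≤ 1) ∧
    (∑ e ∈ F, t e * P e) ≤ x ∧ v = ∑ e ∈ F, t e * Q e}

/-! ### Auxiliary lemmas -/

set_option linter.unusedSectionVars false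

section Aux

lemma powSet_bddAbove (F : Finset (V × V)) (P Q : V × V → ℝ) (x : ℝ) :
    BddAbove {v : ℝ | ∃ t : V × V → ℝ, (∀ e, 0 ≤ t e ∧ t e ≤ 1) ∧
      (∑ e ∈ F, t e * P e) ≤ x ∧ v = ∑ e ∈ F, t e * Q e} := by
  refine ⟨∑ e ∈ F, max (Q e) 0, ?_⟩
  rintro v ⟨t, ht, -, rfl⟩
  refine Finset.sum_le_sum fun e _ => ?_
  rcases le_or_gt 0 (Q e) with h | h
  · exact le_trans (mul_le_of_le_one_left h (ht e).2) (le_max_left _ _)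
  · exact le_trans (mul_nonpos_of_nonneg_of_nonpos (ht e).1 h.le) (le_max_right _ _)

lemma le_powFn (F : Finset (V × V)) (P Q : V × V → ℝ) (x : ℝ) (t : V × V → ℝ)
    (ht : ∀ e, 0 ≤ t e ∧ t e ≤ 1) (htP : (∑ e ∈ F, t e * P e) ≤ x) :
    (∑ e ∈ F, t e * Q e) ≤ powFn F P Q x :=
  le_csSup (powSet_bddAbove F P Q x) ⟨t, ht, htP, rfl⟩

lemma powFn_le_linear (F : Finset (V × V)) (P Q : V × V → ℝ) (x c : ℝ)
    (hc : 0 ≤ c) (hx : 0 ≤ x) :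
    powFn F P Q x ≤ c * x + ∑ e ∈ F, max (Q e - c * P e) 0 := by
  apply csSup_le
  · exact ⟨0, fun _ => 0, fun _ => ⟨le_refl 0, zero_le_one⟩, by simpa using hx, by simp⟩
  · rintro v ⟨t, ht, htP, rfl⟩
    have key : ∀ e ∈ F, t e * Q e ≤ max (Q e - c * P e) 0 + c * (t e * P e) := by
      intro e _
      have h1 : t e * (Q e - c * P e) ≤ max (Q e - c * P e) 0 := by
        rcases le_or_gt 0 (Q e - c * P e) with h | h
        · exact le_trans (mul_le_of_le_one_left h (ht e).2) (le_max_left _ _)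
        · exact le_trans (mul_nonpos_of_nonneg_of_nonpos (ht e).1 h.le) (le_max_right _ _)
      nlinarith [h1]
    calc ∑ e ∈ F, t e * Q e
        ≤ ∑ e ∈ F, (max (Q e - c * P e) 0 + c * (t e * P e)) := Finset.sum_le_sum key
      _ = (∑ e ∈ F, max (Q e - c * P e) 0) + c * ∑ e ∈ F, t e * P e := by
          rw [Finset.sum_add_distrib, Finset.mul_sum]
      _ ≤ c * x + ∑ e ∈ F, max (Q e - c * P e) 0 := by
          have := mul_le_mul_of_nonneg_left htP hc; linarith

lemma sum_filter_fst_eq (F : Finset (V × V)) (S : Finset V) (f : V × V → ℝ) :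
    ∑ e ∈ F.filter (fun e => e.1 ∈ S), f e = ∑ i ∈ S, payload0 F f i := by
  rw [← Finset.sum_fiberwise_of_maps_to (t := S) (g := Prod.fst)
      (fun e he => (mem_filter.mp he).2) f]
  refine Finset.sum_congr rfl fun i hi => ?_
  rw [payload0, Finset.filter_filter]
  refine Finset.sum_congr (Finset.filter_congr fun e he => ?_) fun _ _ => rfl
  exact ⟨And.right, fun h => ⟨h ▸ hi, h⟩⟩

lemma sum_filter_snd_eq (F : Finset (V × V)) (S : Finset V) (f : V × V → ℝ) :
    ∑ e ∈ F.filter (fun e => e.2 ∈ S), f e = ∑ j ∈ S, payload1 F f j := by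
  rw [← Finset.sum_fiberwise_of_maps_to (t := S) (g := Prod.snd)
      (fun e he => (mem_filter.mp he).2) f]
  refine Finset.sum_congr rfl fun j hj => ?_
  rw [payload1, Finset.filter_filter]
  refine Finset.sum_congr (Finset.filter_congr fun e he => ?_) fun _ _ => rfl
  exact ⟨And.right, fun h => ⟨h ▸ hj, h⟩⟩

lemma sum_eq_sum_payload0 (I0 : Finset V) (F : Finset (V × V))
    (hmap : ∀ e ∈ F, e.1 ∈ I0) (f : V × V → ℝ) :
    ∑ e ∈ F, f e = ∑ i ∈ I0, payload0 F f i := by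
  rw [← sum_filter_fst_eq]
  congr 1
  exact (Finset.filter_true_of_mem hmap).symm

lemma sum_eq_sum_payload1 (I1 : Finset V) (F : Finset (V × V))
    (hmap : ∀ e ∈ F, e.2 ∈ I1) (f : V × V → ℝ) :
    ∑ e ∈ F, f e = ∑ j ∈ I1, payload1 F f j := by
  rw [← sum_filter_snd_eq]
  congr 1
  exact (Finset.filter_true_of_mem hmap).symm

end Aux
section Hinge

variable {I0 I1 : Finset V} {F : Finset (V × V)} {w : V → ℝ} {a0 a1 : V × V → ℝ}

lemma payload0_a1_pos (hG : IsDistInstance I0 I1 F w)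
    (ha0 : IsRefinement0 I0 F w a0) (ha1 : IsRefinement1 I1 F w a1)
    (hpr1 : IsPropRespOf1 F w a1 a0) :
    ∀ i ∈ I0, 0 < payload0 F a1 i := by
  obtain ⟨⟨hdisj, hFmem, hw⟩, hn0, hn1, hs0, hs1⟩ := hG
  intro i hi
  have hpw : payload0 F a0 i = w i := ha0.2.2 i hi (hn0 i hi)
  have hwp : 0 < w i := hw i (Finset.mem_union_left _ hi)
  have hpos : 0 < payload0 F a0 i := hpw ▸ hwp
  obtain ⟨e, he, hae⟩ : ∃ e ∈ F.filter (fun e => e.1 = i), 0 < a0 e := by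
    by_contra hcon
    push_neg at hcon
    have h0 : payload0 F a0 i = 0 :=
      Finset.sum_eq_zero fun e he => le_antisymm (hcon e he) (ha0.1 e)
    rw [h0] at hpos; exact lt_irrefl _ hpos
  rw [Finset.mem_filter] at he
  obtain ⟨heF, hei⟩ := he
  by_contra hnp
  have hp0 : payload0 F a1 i = 0 :=
    le_antisymm (not_lt.mp hnp) (Finset.sum_nonneg fun e _ => ha1.1 e)
  have hd := hpr1.2 e heF
  rw [hei, hp0, div_zero] at hd
  rw [hd] at hae
  exact lt_irrefl _ hae

lemma a1_eq_density_mul (hG : IsDistInstance I0 I1 F w)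
    (ha0 : IsRefinement0 I0 F w a0) (ha1 : IsRefinement1 I1 F w a1)
    (hpr1 : IsPropRespOf1 F w a1 a0) :
    ∀ e ∈ F, a1 e = density0 F w a1 e.1 * a0 e := by
  intro e he
  have hi : e.1 ∈ I0 := (hG.1.2.1 e he).1
  have hp := payload0_a1_pos hG ha0 ha1 hpr1 e.1 hi
  have hwp : 0 < w e.1 := hG.1.2.2 e.1 (Finset.mem_union_left _ hi)
  have hd := hpr1.2 e he
  rw [density0, hd]
  field_simp

/-- The key hinge inequality. -/
lemma hinge_ineq (hG : IsDistInstance I0 I1 F w)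
    (ha0 : IsRefinement0 I0 F w a0) (ha1 : IsRefinement1 I1 F w a1)
    (hm1 : LocallyMaximin1 F w a1) (hpr1 : IsPropRespOf1 F w a1 a0)
    (b0 b1 : V × V → ℝ) (hb0 : IsRefinement0 I0 F w b0) (hb1 : IsRefinement1 I1 F w b1)
    (c : ℝ) (hc : 0 ≤ c) :
    ∑ e ∈ F, min (b1 e) (c * b0 e) ≤ ∑ e ∈ F, min (a1 e) (c * a0 e) := by
  classical
  have hf1 := a1_eq_density_mul hG ha0 ha1 hpr1
  obtain ⟨⟨hdisj, hFmem, hw⟩, hn0, hn1, hs0, hs1⟩ := hG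
  set S : Finset V := I0.filter (fun i => density0 F w a1 i ≤ c) with hSdef
  set NS : Finset V := I1.filter (fun j => ∃ i ∈ S, (i, j) ∈ F) with hNSdef
  have hwpos : ∀ i ∈ I0, 0 < w i := fun i hi => hw i (Finset.mem_union_left _ hi)
  -- (c1)
  have hc1 : ∀ e ∈ F, e.1 ∈ S → e.2 ∈ NS := by
    intro e he h1
    exact Finset.mem_filter.mpr ⟨(hFmem e he).2, ⟨e.1, h1, by rwa [Prod.mk.eta]⟩⟩
  -- (c2)
  have hc2 : ∀ e ∈ F, e.2 ∈ NS → 0 < a1 e → e.1 ∈ S := by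
    intro e he h2 hpos
    obtain ⟨i0, hi0S, hi0F⟩ := (Finset.mem_filter.mp h2).2
    have hle := hm1 e he hpos i0 hi0F
    have hi0 : density0 F w a1 i0 ≤ c := (Finset.mem_filter.mp hi0S).2
    exact Finset.mem_filter.mpr ⟨(hFmem e he).1, le_trans hle hi0⟩
  -- (c3): a1-mass of edges leaving S equals w-mass of NS
  have hc3 : ∑ e ∈ F.filter (fun e => e.1 ∈ S), a1 e = ∑ j ∈ NS, w j := by
    have step1 : ∑ e ∈ F.filter (fun e => e.1 ∈ S), a1 e
        = ∑ e ∈ F.filter (fun e => e.2 ∈ NS), a1 e := by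
      apply Finset.sum_subset
      · intro e he
        rw [Finset.mem_filter] at he ⊢
        exact ⟨he.1, hc1 e he.1 he.2⟩
      · intro e he hne
        rw [Finset.mem_filter] at he
        rw [Finset.mem_filter] at hne
        by_contra hne0
        have hpos : 0 < a1 e := lt_of_le_of_ne (ha1.1 e) (Ne.symm hne0)
        exact (hne ⟨he.1, hc2 e he.1 he.2 hpos⟩).elim
    rw [step1, sum_filter_snd_eq]
    refine Finset.sum_congr rfl fun j hj => ?_
    have hjI1 : j ∈ I1 := (Finset.mem_filter.mp hj).1
    exact ha1.2.2 j hjI1 (hn1 j hjI1)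
  -- (c4)
  have hc4 : ∑ e ∈ F.filter (fun e => e.1 ∈ S), b1 e ≤ ∑ j ∈ NS, w j := by
    have step1 : ∑ e ∈ F.filter (fun e => e.1 ∈ S), b1 e
        ≤ ∑ e ∈ F.filter (fun e => e.2 ∈ NS), b1 e := by
      apply Finset.sum_le_sum_of_subset_of_nonneg
      · intro e he
        rw [Finset.mem_filter] at he ⊢
        exact ⟨he.1, hc1 e he.1 he.2⟩
      · intro e _ _; exact hb1.1 e
    rw [sum_filter_snd_eq] at step1
    refine le_trans step1 (le_of_eq (Finset.sum_congr rfl fun j hj => ?_))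
    have hjI1 : j ∈ I1 := (Finset.mem_filter.mp hj).1
    exact hb1.2.2 j hjI1 (hn1 j hjI1)
  -- complement filter rewriting
  have hcompl : ∀ g : V × V → ℝ, ∑ e ∈ F.filter (fun e => ¬ e.1 ∈ S), g e
      = ∑ i ∈ I0 \ S, payload0 F g i := by
    intro g
    rw [← sum_filter_fst_eq]
    refine Finset.sum_congr (Finset.filter_congr fun e he => ?_) fun _ _ => rfl
    constructor
    · intro h; exact Finset.mem_sdiff.mpr ⟨(hFmem e he).1, h⟩
    · intro h; exact (Finset.mem_sdiff.mp h).2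
  -- RHS evaluation
  have hRHSs : ∑ e ∈ F.filter (fun e => e.1 ∈ S), min (a1 e) (c * a0 e)
      = ∑ e ∈ F.filter (fun e => e.1 ∈ S), a1 e := by
    refine Finset.sum_congr rfl fun e he => ?_
    rw [Finset.mem_filter] at he
    have hd : density0 F w a1 e.1 ≤ c := (Finset.mem_filter.mp he.2).2
    have h1 := hf1 e he.1
    have : a1 e ≤ c * a0 e := by
      rw [h1]; exact mul_le_mul_of_nonneg_right hd (ha0.1 e)
    exact min_eq_left this
  have hRHSns : ∑ e ∈ F.filter (fun e => ¬ e.1 ∈ S), min (a1 e) (c * a0 e)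
      = c * ∑ i ∈ I0 \ S, w i := by
    have step : ∑ e ∈ F.filter (fun e => ¬ e.1 ∈ S), min (a1 e) (c * a0 e)
        = ∑ e ∈ F.filter (fun e => ¬ e.1 ∈ S), c * a0 e := by
      refine Finset.sum_congr rfl fun e he => ?_
      rw [Finset.mem_filter] at he
      have hi : e.1 ∈ I0 := (hFmem e he.1).1
      have hd : c < density0 F w a1 e.1 := by
        by_contra hle
        exact he.2 (Finset.mem_filter.mpr ⟨hi, not_lt.mp hle⟩)
      have h1 := hf1 e he.1
      have : c * a0 e ≤ a1 e := by
        rw [h1]; exact mul_le_mul_of_nonneg_right hd.le (ha0.1 e)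
      exact min_eq_right this
    rw [step]
    have := hcompl (fun e => c * a0 e)
    rw [this]
    rw [Finset.mul_sum]
    refine Finset.sum_congr rfl fun i hi => ?_
    have hiI0 : i ∈ I0 := (Finset.mem_sdiff.mp hi).1
    rw [payload0]
    rw [show (∑ e ∈ F.filter (fun e => e.1 = i), c * a0 e) = c * ∑ e ∈ F.filter (fun e => e.1 = i), a0 e from (Finset.mul_sum _ _ _).symm]
    rw [show (∑ e ∈ F.filter (fun e => e.1 = i), a0 e) = payload0 F a0 i from rfl]
    rw [ha0.2.2 i hiI0 (hn0 i hiI0)]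
  -- LHS bound
  have hLHSs : ∑ e ∈ F.filter (fun e => e.1 ∈ S), min (b1 e) (c * b0 e)
      ≤ ∑ e ∈ F.filter (fun e => e.1 ∈ S), b1 e :=
    Finset.sum_le_sum fun e _ => min_le_left _ _
  have hLHSns : ∑ e ∈ F.filter (fun e => ¬ e.1 ∈ S), min (b1 e) (c * b0 e)
      ≤ c * ∑ i ∈ I0 \ S, w i := by
    have step : ∑ e ∈ F.filter (fun e => ¬ e.1 ∈ S), min (b1 e) (c * b0 e)
        ≤ ∑ e ∈ F.filter (fun e => ¬ e.1 ∈ S), c * b0 e :=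
      Finset.sum_le_sum fun e _ => min_le_right _ _
    refine le_trans step (le_of_eq ?_)
    rw [hcompl (fun e => c * b0 e), Finset.mul_sum]
    refine Finset.sum_congr rfl fun i hi => ?_
    have hiI0 : i ∈ I0 := (Finset.mem_sdiff.mp hi).1
    rw [payload0]
    rw [show (∑ e ∈ F.filter (fun e => e.1 = i), c * b0 e) = c * ∑ e ∈ F.filter (fun e => e.1 = i), b0 e from (Finset.mul_sum _ _ _).symm]
    rw [show (∑ e ∈ F.filter (fun e => e.1 = i), b0 e) = payload0 F b0 i from rfl]
    rw [hb0.2.2 i hiI0 (hn0 i hiI0)]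
  calc ∑ e ∈ F, min (b1 e) (c * b0 e)
      = ∑ e ∈ F.filter (fun e => e.1 ∈ S), min (b1 e) (c * b0 e)
        + ∑ e ∈ F.filter (fun e => ¬ e.1 ∈ S), min (b1 e) (c * b0 e) :=
        (Finset.sum_filter_add_sum_filter_not F _ _).symm
    _ ≤ (∑ j ∈ NS, w j) + c * ∑ i ∈ I0 \ S, w i := add_le_add (le_trans hLHSs hc4) hLHSns
    _ = ∑ e ∈ F.filter (fun e => e.1 ∈ S), min (a1 e) (c * a0 e)
        + ∑ e ∈ F.filter (fun e => ¬ e.1 ∈ S), min (a1 e) (c * a0 e) := by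
        rw [hRHSs, hRHSns, hc3]
    _ = ∑ e ∈ F, min (a1 e) (c * a0 e) := Finset.sum_filter_add_sum_filter_not F _ _

end Hinge
section Greedy

variable {I0 I1 : Finset V} {F : Finset (V × V)} {w : V → ℝ}

lemma exists_dual_le_powFn (hG : IsDistInstance I0 I1 F w)
    (b0 b1 : V × V → ℝ) (hb0 : IsRefinement0 I0 F w b0) (hb1 : IsRefinement1 I1 F w b1)
    (x : ℝ) (hx : x ∈ Set.Icc (0:ℝ) 1) :
    ∃ c : ℝ, 0 ≤ c ∧
      c * x + (∑ e ∈ F, max (b1 e - c * b0 e) 0) ≤ powFn F b0 b1 x := by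
  classical
  obtain ⟨⟨hdisj, hFmem, hw⟩, hn0, hn1, hs0, hs1⟩ := hG
  obtain ⟨hx0, hx1⟩ := hx
  -- total b0 mass is 1
  have hsumb0 : ∑ e ∈ F, b0 e = 1 := by
    rw [sum_eq_sum_payload0 I0 F (fun e he => (hFmem e he).1) b0]
    rw [← hs0]
    exact Finset.sum_congr rfl fun i hi => hb0.2.2 i hi (hn0 i hi)
  set Fp : Finset (V × V) := F.filter (fun e => 0 < b0 e) with hFp
  have hFp0 : ∀ e ∈ F, e ∉ Fp → b0 e = 0 := by
    intro e he hne
    by_contra h0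
    exact hne (Finset.mem_filter.mpr ⟨he, lt_of_le_of_ne (hb0.1 e) (Ne.symm h0)⟩)
  have hsumFp : ∑ e ∈ Fp, b0 e = 1 := by
    rw [Finset.sum_subset (Finset.filter_subset _ F) hFp0]; exact hsumb0
  set R : Finset ℝ := insert (0:ℝ) (Fp.image (fun e => b1 e / b0 e)) with hR
  have hRne : R.Nonempty := Finset.insert_nonempty _ _
  have hR0 : ∀ r ∈ R, 0 ≤ r := by
    intro r hr
    rcases Finset.mem_insert.mp hr with h | h
    · exact h.ge
    · obtain ⟨e, he, rfl⟩ := Finset.mem_image.mp h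
      exact div_nonneg (hb1.1 e) (hb0.1 e)
  set g : ℝ → ℝ := fun c => ∑ e ∈ Fp.filter (fun e => c * b0 e < b1 e), b0 e with hg
  set h : ℝ → ℝ := fun c => ∑ e ∈ Fp.filter (fun e => c * b0 e ≤ b1 e), b0 e with hh
  have hgh : ∀ c, g c ≤ h c := by
    intro c
    apply Finset.sum_le_sum_of_subset_of_nonneg
    · intro e he
      rw [Finset.mem_filter] at he ⊢
      exact ⟨he.1, he.2.le⟩
    · intro e _ _; exact hb0.1 e
  -- the threshold exists
  set T : Finset ℝ := R.filter (fun r => g r ≤ x) with hT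
  have hTne : T.Nonempty := by
    refine ⟨R.max' hRne, Finset.mem_filter.mpr ⟨R.max'_mem hRne, ?_⟩⟩
    have hempty : Fp.filter (fun e => (R.max' hRne) * b0 e < b1 e) = ∅ := by
      rw [Finset.filter_eq_empty_iff]
      intro e he
      have hbe : 0 < b0 e := (Finset.mem_filter.mp he).2
      have hmem : b1 e / b0 e ∈ R :=
        Finset.mem_insert_of_mem (Finset.mem_image_of_mem _ he)
      have := Finset.le_max' R _ hmem
      rw [div_le_iff₀ hbe] at this
      rw [not_lt]
      exact this
    simp only [g, hempty, Finset.sum_empty]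
    exact hx0
  set c : ℝ := T.min' hTne with hcdef
  have hcT : c ∈ T := T.min'_mem hTne
  have hcR : c ∈ R := (Finset.mem_filter.mp hcT).1
  have hgc : g c ≤ x := (Finset.mem_filter.mp hcT).2
  have hc0 : 0 ≤ c := hR0 c hcR
  have hhc : x ≤ h c := by
    by_cases hex : ∃ r ∈ R, r < c
    · set R' : Finset ℝ := R.filter (fun r => r < c) with hR'
      have hR'ne : R'.Nonempty := by
        obtain ⟨r, hr, hrc⟩ := hex
        exact ⟨r, Finset.mem_filter.mpr ⟨hr, hrc⟩⟩
      set r' : ℝ := R'.max' hR'ne with hr'def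
      have hr'R : r' ∈ R := (Finset.mem_filter.mp (R'.max'_mem hR'ne)).1
      have hr'c : r' < c := (Finset.mem_filter.mp (R'.max'_mem hR'ne)).2
      have hr'T : r' ∉ T := by
        intro hmem
        exact absurd (T.min'_le r' hmem) (not_le.mpr hr'c)
      have hxr' : x < g r' := by
        by_contra hle
        exact hr'T (Finset.mem_filter.mpr ⟨hr'R, not_lt.mp hle⟩)
      have hsub : g r' ≤ h c := by
        apply Finset.sum_le_sum_of_subset_of_nonneg
        · intro e he
          rw [Finset.mem_filter] at he ⊢
          obtain ⟨heFp, hlt⟩ := he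
          have hbe : 0 < b0 e := (Finset.mem_filter.mp heFp).2
          have hratio : b1 e / b0 e ∈ R :=
            Finset.mem_insert_of_mem (Finset.mem_image_of_mem _ heFp)
          have hr'lt : r' < b1 e / b0 e := by
            rw [lt_div_iff₀ hbe]
            linarith [hlt, (mul_comm (b0 e) r' : b0 e * r' = r' * b0 e)]
          have hcle : c ≤ b1 e / b0 e := by
            by_contra hlt2
            push_neg at hlt2
            have : b1 e / b0 e ≤ r' :=
              Finset.le_max' R' _ (Finset.mem_filter.mpr ⟨hratio, hlt2⟩)
            exact absurd hr'lt (not_lt.mpr this)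
          have hfin := mul_le_mul_of_nonneg_right hcle hbe.le
          rw [div_mul_cancel₀ _ hbe.ne'] at hfin
          exact ⟨heFp, hfin⟩
        · intro e _ _; exact hb0.1 e
      linarith
    · push_neg at hex
      have hcz : c = 0 := le_antisymm (hex 0 (Finset.mem_insert_self _ _)) hc0
      have : h c = 1 := by
        rw [hcz]
        have : Fp.filter (fun e => (0:ℝ) * b0 e ≤ b1 e) = Fp := by
          rw [Finset.filter_eq_self]
          intro e _
          rw [zero_mul]
          exact hb1.1 e
        simp only [h, this]
        exact hsumFp
      rw [this]; exact hx1
  -- the fractional level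
  set m : ℝ := h c - g c with hm
  have hm0 : 0 ≤ m := by simp only [m]; linarith [hgh c]
  set θ : ℝ := if m = 0 then 0 else (x - g c) / m with hθdef
  have hθ0 : 0 ≤ θ := by
    simp only [hθdef]
    split
    · exact le_refl 0
    · exact div_nonneg (by linarith) hm0
  have hθ1 : θ ≤ 1 := by
    simp only [hθdef]
    split
    · exact zero_le_one
    · rename_i hne
      rw [div_le_one (lt_of_le_of_ne hm0 (Ne.symm hne))]
      simp only [hm]
      linarith
  have hθm : θ * m = x - g c := by
    simp only [hθdef]
    split
    · rename_i h0
      rw [zero_mul]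
      simp only [hm] at h0
      linarith
    · rename_i hne
      rw [div_mul_cancel₀ _ hne]
  set t : V × V → ℝ := fun e =>
    if c * b0 e < b1 e then 1
    else if b1 e = c * b0 e ∧ 0 < b0 e then θ else 0 with htdef
  have htb : ∀ e, 0 ≤ t e ∧ t e ≤ 1 := by
    intro e
    simp only [htdef]
    split
    · exact ⟨zero_le_one, le_refl 1⟩
    · split
      · exact ⟨hθ0, hθ1⟩
      · exact ⟨le_refl 0, zero_le_one⟩
  -- mass at the fractional level
  set Em : Finset (V × V) := Fp.filter (fun e => b1 e = c * b0 e) with hEm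
  have hd1 : ∑ e ∈ Em, b0 e = m := by
    have hsplit := Finset.sum_filter_add_sum_filter_not
      (Fp.filter (fun e => c * b0 e ≤ b1 e)) (fun e => c * b0 e < b1 e) b0
    have he1 : (Fp.filter (fun e => c * b0 e ≤ b1 e)).filter (fun e => c * b0 e < b1 e)
        = Fp.filter (fun e => c * b0 e < b1 e) := by
      rw [Finset.filter_filter]
      exact Finset.filter_congr fun e _ => ⟨And.right, fun hlt => ⟨hlt.le, hlt⟩⟩
    have he2 : (Fp.filter (fun e => c * b0 e ≤ b1 e)).filter (fun e => ¬ c * b0 e < b1 e)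
        = Em := by
      rw [Finset.filter_filter, hEm]
      refine Finset.filter_congr fun e _ => ?_
      constructor
      · rintro ⟨hle, hnlt⟩
        exact le_antisymm (not_lt.mp hnlt) hle
      · intro heq
        exact ⟨heq.ge, not_lt.mpr heq.le⟩
    rw [he1, he2] at hsplit
    simp only [hm, g, h]
    linarith
  -- the constraint is tight
  have hcon : ∑ e ∈ F, t e * b0 e = x := by
    have hstep : ∑ e ∈ F, t e * b0 e = ∑ e ∈ Fp, t e * b0 e := by
      refine (Finset.sum_subset (Finset.filter_subset _ F) ?_).symm
      intro e he hne
      rw [hFp0 e he hne, mul_zero]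
    rw [hstep]
    rw [← Finset.sum_filter_add_sum_filter_not Fp (fun e => c * b0 e < b1 e) (fun e => t e * b0 e)]
    have hpart1 : ∑ e ∈ Fp.filter (fun e => c * b0 e < b1 e), t e * b0 e = g c := by
      refine Finset.sum_congr rfl fun e he => ?_
      have hlt : c * b0 e < b1 e := (Finset.mem_filter.mp he).2
      simp only [htdef, if_pos hlt, one_mul]
    have hpart2 : ∑ e ∈ Fp.filter (fun e => ¬ c * b0 e < b1 e), t e * b0 e
        = θ * ∑ e ∈ Em, b0 e := by
      rw [Finset.mul_sum]
      have heq : ∀ e ∈ Fp.filter (fun e => ¬ c * b0 e < b1 e),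
          t e * b0 e = if b1 e = c * b0 e then θ * b0 e else 0 := by
        intro e he
        rw [Finset.mem_filter] at he
        obtain ⟨heFp, hnlt⟩ := he
        have hb0pos : 0 < b0 e := (Finset.mem_filter.mp heFp).2
        simp only [htdef, if_neg hnlt]
        by_cases heqc : b1 e = c * b0 e
        · rw [if_pos ⟨heqc, hb0pos⟩, if_pos heqc]
        · rw [if_neg (fun hand => heqc hand.1), if_neg heqc, zero_mul]
      rw [Finset.sum_congr rfl heq, ← Finset.sum_filter, Finset.filter_filter]
      refine Finset.sum_congr ?_ fun _ _ => rfl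
      rw [hEm]
      exact Finset.filter_congr fun e _ =>
        ⟨And.right, fun heq2 => ⟨not_lt.mpr heq2.le, heq2⟩⟩
    rw [hpart1, hpart2, hd1]
    linarith [hθm]
  -- termwise objective identity
  have hterm : ∀ e ∈ F, t e * b1 e = max (b1 e - c * b0 e) 0 + c * (t e * b0 e) := by
    intro e _
    simp only [htdef]
    by_cases hlt : c * b0 e < b1 e
    · rw [if_pos hlt, max_eq_left (by linarith), one_mul, one_mul]
      ring
    · rw [if_neg hlt, max_eq_right (by push_neg at hlt; linarith)]
      by_cases hmid : b1 e = c * b0 e ∧ 0 < b0 e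
      · rw [if_pos hmid, hmid.1]
        ring
      · rw [if_neg hmid]
        ring
  refine ⟨c, hc0, ?_⟩
  have hle := le_powFn F b0 b1 x t htb (le_of_eq hcon)
  have hobj : ∑ e ∈ F, t e * b1 e
      = (∑ e ∈ F, max (b1 e - c * b0 e) 0) + c * ∑ e ∈ F, t e * b0 e := by
    rw [Finset.sum_congr rfl hterm, Finset.sum_add_distrib, Finset.mul_sum]
  rw [hcon] at hobj
  linarith

end Greedy
section Final

variable {I0 I1 : Finset V} {F : Finset (V × V)} {w : V → ℝ}

lemma sum_a1_eq_one (hG : IsDistInstance I0 I1 F w) {a1 : V × V → ℝ}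
    (ha1 : IsRefinement1 I1 F w a1) : ∑ e ∈ F, a1 e = 1 := by
  rw [sum_eq_sum_payload1 I1 F (fun e he => (hG.1.2.1 e he).2) a1, ← hG.2.2.2.2]
  exact Finset.sum_congr rfl fun j hj => ha1.2.2 j hj (hG.2.2.1 j hj)

lemma powFn_maximin_le (hG : IsDistInstance I0 I1 F w)
    (a0 a1 : V × V → ℝ) (ha0 : IsRefinement0 I0 F w a0) (ha1 : IsRefinement1 I1 F w a1)
    (hm1 : LocallyMaximin1 F w a1) (hpr1 : IsPropRespOf1 F w a1 a0)
    (b0 b1 : V × V → ℝ) (hb0 : IsRefinement0 I0 F w b0) (hb1 : IsRefinement1 I1 F w b1)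
    (x : ℝ) (hx : x ∈ Set.Icc (0:ℝ) 1) :
    powFn F a0 a1 x ≤ powFn F b0 b1 x := by
  obtain ⟨c, hc0, hdual⟩ := exists_dual_le_powFn hG b0 b1 hb0 hb1 x hx
  refine le_trans (powFn_le_linear F a0 a1 x c hc0 hx.1) (le_trans ?_ hdual)
  have hh := hinge_ineq hG ha0 ha1 hm1 hpr1 b0 b1 hb0 hb1 c hc0
  have hsa : ∑ e ∈ F, a1 e = 1 := sum_a1_eq_one hG ha1
  have hsb : ∑ e ∈ F, b1 e = 1 := sum_a1_eq_one hG hb1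
  have hid : ∀ p q : ℝ, max (p - q) 0 = p - min p q := by
    intro p q
    rcases le_total p q with h | h
    · rw [min_eq_left h, max_eq_right (by linarith), sub_self]
    · rw [min_eq_right h, max_eq_left (by linarith)]
  have h1 : ∑ e ∈ F, max (a1 e - c * a0 e) 0
      = 1 - ∑ e ∈ F, min (a1 e) (c * a0 e) := by
    rw [Finset.sum_congr rfl (fun e _ => hid (a1 e) (c * a0 e)),
      Finset.sum_sub_distrib, hsa]
  have h2 : ∑ e ∈ F, max (b1 e - c * b0 e) 0
      = 1 - ∑ e ∈ F, min (b1 e) (c * b0 e) := by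
    rw [Finset.sum_congr rfl (fun e _ => hid (b1 e) (c * b0 e)),
      Finset.sum_sub_distrib, hsb]
  linarith

end Final

/-- **A locally maximin pair gives the minimal power function.**
In a distribution instance, if the refinement pair `(a0, a1)` is locally maximin on both
sides and mutually proportional responses, then its power function is pointwise minimal
among all refinement pairs; in particular, any two such pairs give rise to the same
power function. -/
theorem locally_maximin_pair_minimal_power_function
    (I0 I1 : Finset V) (F : Finset (V × V)) (w : V → ℝ)
    (hG : IsDistInstance I0 I1 F w)
    (a0 a1 : V × V → ℝ)
    (ha0 : IsRefinement0 I0 F w a0) (ha1 : IsRefinement1 I1 F w a1)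
    (hm0 : LocallyMaximin0 F w a0) (hm1 : LocallyMaximin1 F w a1)
    (hpr0 : IsPropRespOf0 F w a0 a1) (hpr1 : IsPropRespOf1 F w a1 a0) :
    (∀ b0 b1 : V × V → ℝ, IsRefinement0 I0 F w b0 → IsRefinement1 I1 F w b1 →
      ∀ x ∈ Set.Icc (0:ℝ) 1, powFn F a0 a1 x ≤ powFn F b0 b1 x) ∧
    (∀ a0' a1' : V × V → ℝ, IsRefinement0 I0 F w a0' → IsRefinement1 I1 F w a1' →
      LocallyMaximin0 F w a0' → LocallyMaximin1 F w a1' →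
      IsPropRespOf0 F w a0' a1' → IsPropRespOf1 F w a1' a0' →
      ∀ x ∈ Set.Icc (0:ℝ) 1, powFn F a0 a1 x = powFn F a0' a1' x) := by
  constructor
  · intro b0 b1 hb0 hb1 x hx
    exact powFn_maximin_le hG a0 a1 ha0 ha1 hm1 hpr1 b0 b1 hb0 hb1 x hx
  · intro a0' a1' ha0' ha1' hm0' hm1' hpr0' hpr1' x hx
    exact le_antisymm
      (powFn_maximin_le hG a0 a1 ha0 ha1 hm1 hpr1 a0' a1' ha0' ha1' x hx)
      (powFn_maximin_le hG a0' a1' ha0' ha1' hm1' hpr1' a0 a1 ha0 ha1 x hx)
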